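/- Suppose Ω = {0,1}. If I₀ ∈ {0,1} then the expected posterior variance equals σ². If I₀ ∉ {0,1}, then the expected posterior variance equals σ² − (I₁ − μ I₀)² / (I₀ (1 − I₀)). -/

import Mathlib

open MeasureTheory

open scoped Classical in
/-- for a two-outcome likelihood (`Ω = {0,1}`), if `I₀ ∈ {0,1}` then the
expected posterior variance equals σ², and if `I₀ ∉ {0,1}` it equals
`σ² − (I₁ − μ I₀)²/(I₀(1 − I₀))`, where `I_k = I_k(0)`. -/
theorem statement2
    (p : ℝ → ℝ) (hp_cont : Continuous p) (hp_nonneg : ∀ θ, 0 ≤ p θ)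
    (hp_one : (∫ θ : ℝ, p θ) = 1)
    (hp_sq : Integrable (fun θ : ℝ => θ ^ 2 * p θ))
    (L0 : ℝ → ℝ) (hL_cont : Continuous L0)
    (hL_nonneg : ∀ θ, 0 ≤ L0 θ) (hL_le : ∀ θ, L0 θ ≤ 1)
    (μ σ2 : ℝ) (hμ : μ = ∫ θ : ℝ, θ * p θ) (hσ : σ2 = ∫ θ : ℝ, (θ - μ) ^ 2 * p θ)
    (I : ℕ → Fin 2 → ℝ)
    (hI0 : ∀ k, I k 0 = ∫ θ : ℝ, θ ^ k * (L0 θ * p θ))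
    (hI1 : ∀ k, I k 1 = ∫ θ : ℝ, θ ^ k * ((1 - L0 θ) * p θ))
    (EPV : ℝ)
    (hEPV : EPV = ∑ d ∈ Finset.univ.filter (fun d : Fin 2 => I 0 d ≠ 0),
        I 0 d * (I 2 d / I 0 d - (I 1 d / I 0 d) ^ 2)) :
    (I 0 0 = 0 ∨ I 0 0 = 1 → EPV = σ2) ∧
    (I 0 0 ≠ 0 ∧ I 0 0 ≠ 1 →
      EPV = σ2 - (I 1 0 - μ * I 0 0) ^ 2 / (I 0 0 * (1 - I 0 0))) := by
  have hpint : Integrable p := by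
    by_contra h
    rw [integral_undef h] at hp_one
    norm_num at hp_one
  have hθp : Integrable (fun θ : ℝ => θ * p θ) := by
    refine (hpint.add hp_sq).mono
      ((continuous_id.mul hp_cont).aestronglyMeasurable) (ae_of_all _ fun θ => ?_)
    have h1 : |θ * p θ| = |θ| * p θ := by
      rw [abs_mul, abs_of_nonneg (hp_nonneg θ)]
    have h2 : p θ + θ ^ 2 * p θ = |p θ + θ ^ 2 * p θ| := by
      rw [abs_of_nonneg]; nlinarith [hp_nonneg θ, sq_nonneg θ]
    simp only [Pi.add_apply, Real.norm_eq_abs, h1, ← h2]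
    nlinarith [sq_nonneg (|θ| - 1), hp_nonneg θ, abs_nonneg θ, sq_abs θ]
  have key : ∀ (L : ℝ → ℝ), Continuous L → (∀ θ, 0 ≤ L θ) → (∀ θ, L θ ≤ 1) →
      ∀ k : ℕ, Integrable (fun θ : ℝ => θ ^ k * p θ) →
      Integrable (fun θ : ℝ => θ ^ k * (L θ * p θ)) := by
    intro L hLc hL0 hL1 k hk
    refine hk.mono (((continuous_pow k).mul (hLc.mul hp_cont)).aestronglyMeasurable)
      (ae_of_all _ fun θ => ?_)
    have h1 : |θ ^ k * (L θ * p θ)| = |θ| ^ k * (L θ * p θ) := by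
      rw [abs_mul, abs_pow, abs_of_nonneg (mul_nonneg (hL0 θ) (hp_nonneg θ))]
    have h2 : |θ ^ k * p θ| = |θ| ^ k * p θ := by
      rw [abs_mul, abs_pow, abs_of_nonneg (hp_nonneg θ)]
    simp only [Real.norm_eq_abs, h1, h2]
    have : L θ * p θ ≤ p θ := by nlinarith [hp_nonneg θ, hL1 θ]
    exact mul_le_mul_of_nonneg_left this (by positivity)
  have hL'c : Continuous (fun θ => 1 - L0 θ) := continuous_const.sub hL_cont
  have hL'0 : ∀ θ, 0 ≤ 1 - L0 θ := fun θ => by linarith [hL_le θ]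
  have hL'1 : ∀ θ, 1 - L0 θ ≤ 1 := fun θ => by linarith [hL_nonneg θ]
  have hm0 : Integrable (fun θ : ℝ => (θ:ℝ) ^ 0 * p θ) := by simpa using hpint
  have hm1 : Integrable (fun θ : ℝ => (θ:ℝ) ^ 1 * p θ) := by simpa using hθp
  have hsum : ∀ k : ℕ, Integrable (fun θ : ℝ => θ ^ k * p θ) →
      I k 0 + I k 1 = ∫ θ : ℝ, θ ^ k * p θ := by
    intro k hk
    rw [hI0, hI1, ← integral_add (key L0 hL_cont hL_nonneg hL_le k hk)
      (key _ hL'c hL'0 hL'1 k hk)]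
    congr 1; funext θ; ring
  have e0 : I 0 0 + I 0 1 = 1 := by
    have := hsum 0 hm0; simpa [hp_one] using this
  have e1 : I 1 0 + I 1 1 = μ := by
    have := hsum 1 hm1; rw [this, hμ]; simp
  set M2 : ℝ := ∫ θ : ℝ, θ ^ 2 * p θ with hM2
  have e2 : I 2 0 + I 2 1 = M2 := hsum 2 hp_sq
  have hσ2 : σ2 = M2 - μ ^ 2 := by
    rw [hσ]
    have hre : ∀ θ : ℝ, (θ - μ) ^ 2 * p θ =
        θ ^ 2 * p θ - (2 * μ) * (θ * p θ) + μ ^ 2 * p θ := fun θ => by ring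
    simp_rw [hre]
    have hA : Integrable (fun θ : ℝ => θ ^ 2 * p θ - 2 * μ * (θ * p θ)) := by
      exact hp_sq.sub (hθp.const_mul _)
    have hB : Integrable (fun θ : ℝ => μ ^ 2 * p θ) := hpint.const_mul _
    have hC : Integrable (fun θ : ℝ => 2 * μ * (θ * p θ)) := hθp.const_mul _
    rw [integral_add hA hB, integral_sub hp_sq hC, integral_const_mul, integral_const_mul,
      hp_one, ← hμ]
    ring
  -- zero lemma
  have hzero : ∀ (L : ℝ → ℝ), Continuous L → (∀ θ, 0 ≤ L θ) → (∀ θ, L θ ≤ 1) →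
      (∫ θ : ℝ, (θ:ℝ) ^ 0 * (L θ * p θ)) = 0 →
      ∀ k : ℕ, (∫ θ : ℝ, θ ^ k * (L θ * p θ)) = 0 := by
    intro L hLc hL0 hL1 hint k
    have hI : Integrable (fun θ : ℝ => L θ * p θ) := by
      simpa using key L hLc hL0 hL1 0 hm0
    have h0 : (∫ θ : ℝ, L θ * p θ) = 0 := by simpa using hint
    have hae := (integral_eq_zero_iff_of_nonneg
      (fun θ => mul_nonneg (hL0 θ) (hp_nonneg θ)) hI).mp h0
    have heq : (fun θ : ℝ => L θ * p θ) = fun _ => 0 :=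
      ((hLc.mul hp_cont).ae_eq_iff_eq volume continuous_const).mp hae
    have : ∀ θ : ℝ, L θ * p θ = 0 := fun θ => congrFun heq θ
    simp [this]
  refine ⟨fun h => ?_, fun ⟨h0, h1⟩ => ?_⟩
  · rcases h with h | h
    · -- I 0 0 = 0
      have hz := hzero L0 hL_cont hL_nonneg hL_le (by rw [← hI0 0]; exact h)
      have z1 : I 1 0 = 0 := by rw [hI0]; exact hz 1
      have z2 : I 2 0 = 0 := by rw [hI0]; exact hz 2
      have v0 : I 0 1 = 1 := by linarith
      have v1 : I 1 1 = μ := by linarith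
      have v2 : I 2 1 = M2 := by linarith
      rw [hEPV, Finset.sum_filter, Fin.sum_univ_two]
      simp [h, v0, v1, v2, hσ2]
    · -- I 0 0 = 1, so I 0 1 = 0
      have h1 : I 0 1 = 0 := by linarith
      have hz := hzero _ hL'c hL'0 hL'1 (by rw [← hI1 0]; exact h1)
      have z1 : I 1 1 = 0 := by rw [hI1]; exact hz 1
      have z2 : I 2 1 = 0 := by rw [hI1]; exact hz 2
      have v1 : I 1 0 = μ := by linarith
      have v2 : I 2 0 = M2 := by linarith
      rw [hEPV, Finset.sum_filter, Fin.sum_univ_two]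
      simp [h, h1, v1, v2, hσ2]
  · have h1' : I 0 1 ≠ 0 := by
      intro h; apply h1; linarith
    have v0 : I 0 1 = 1 - I 0 0 := by linarith
    have v1 : I 1 1 = μ - I 1 0 := by linarith
    have v2 : I 2 1 = M2 - I 2 0 := by linarith
    rw [hEPV, Finset.sum_filter, Fin.sum_univ_two, if_pos h0, if_pos h1',
      v0, v1, v2, hσ2]
    have hne : 1 - I 0 0 ≠ 0 := by
      intro h; apply h1; linarith
    field_simp
    ring
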